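/- Let $g$ be a finite set of size $r \geq 2$ and for each subset $S \subseteq g$ with $|S| \geq 2$ let $Y_S$ be a real number. Then $\sum_{s=2}^{r} \sum_{|S|=s, S \subseteq g} \sum_{j=0}^{r-s} \sum_{T \subseteq g \setminus S, |T|=j} (-1)^j Y_{S \cup T} = \sum_{s=2}^{r} \sum_{|S|=s, S \subseteq g} (-1)^s (s-1) Y_S$. -/

import Mathlib

open Finset

-- grouping a powerset sum by cardinality, restricted to card ≥ 2
lemma group_by_card {α : Type*} [DecidableEq α] (r : ℕ) (g : Finset α) (hg : g.card = r)
    (F : Finset α → ℝ) :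
    ∑ s ∈ Icc 2 r, ∑ S ∈ powersetCard s g, F S
      = ∑ S ∈ g.powerset, if 2 ≤ S.card then F S else 0 := by
  rw [powerset_card_disjiUnion, sum_disjiUnion (h := (g.pairwise_disjoint_powersetCard.set_pairwise _)), hg]
  have h1 : ∀ s ∈ range (r+1), (∑ S ∈ powersetCard s g, if 2 ≤ S.card then F S else 0)
      = if 2 ≤ s then ∑ S ∈ powersetCard s g, F S else 0 := by
    intro s _
    split_ifs with h
    · refine sum_congr rfl fun S hS => ?_
      rw [(mem_powersetCard.1 hS).2, if_pos h]
    · refine sum_eq_zero fun S hS => ?_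
      rw [(mem_powersetCard.1 hS).2, if_neg h]
  rw [sum_congr rfl h1, sum_ite, sum_const_zero, add_zero]
  congr 1
  ext s
  simp [Nat.lt_succ_iff]
  omega

lemma binom_alt (m : ℕ) (hm : 2 ≤ m) :
    ∑ s ∈ Icc 2 m, ((m.choose s : ℝ) * (-1) ^ (m - s))
      = (-1 : ℝ) ^ m * ((m : ℝ) - 1) := by
  have h0 : ((1 : ℝ) + (-1)) ^ m = ∑ s ∈ range (m+1), (1:ℝ)^s * (-1)^(m-s) * m.choose s :=
    add_pow 1 (-1) m
  have hsplit : range (m+1) = insert 0 (insert 1 (Icc 2 m)) := by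
    ext s; simp [Nat.lt_succ_iff]; omega
  rw [hsplit] at h0
  rw [sum_insert (by simp), sum_insert (by simp)] at h0
  have hz : ((1:ℝ) + (-1)) ^ m = 0 := by
    simp [zero_pow (show m ≠ 0 by omega)]
  rw [hz] at h0
  simp only [one_pow, one_mul] at h0
  have h1 : ∑ s ∈ Icc 2 m, (-1:ℝ)^(m-s) * (m.choose s : ℝ)
      = -((-1:ℝ)^(m-0) * (m.choose 0 : ℝ)) - (-1:ℝ)^(m-1) * (m.choose 1 : ℝ) := by
    linarith
  calc ∑ s ∈ Icc 2 m, ((m.choose s : ℝ) * (-1) ^ (m - s))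
      = ∑ s ∈ Icc 2 m, (-1:ℝ)^(m-s) * (m.choose s : ℝ) := by
        refine sum_congr rfl fun s _ => by ring
    _ = -((-1:ℝ)^(m-0) * (m.choose 0 : ℝ)) - (-1:ℝ)^(m-1) * (m.choose 1 : ℝ) := h1
    _ = (-1 : ℝ) ^ m * ((m : ℝ) - 1) := by
        rw [Nat.sub_zero, Nat.choose_zero_right, Nat.choose_one_right]
        obtain ⟨k, rfl⟩ : ∃ k, m = k + 1 := ⟨m - 1, by omega⟩
        simp only [Nat.add_sub_cancel, pow_succ]
        push_cast
        ring

lemma reindex {α : Type*} [DecidableEq α] (g S : Finset α) (hS : S ⊆ g) (Y : Finset α → ℝ) :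
    ∑ T ∈ (g \ S).powerset, (-1:ℝ)^T.card * Y (S ∪ T)
      = ∑ S' ∈ g.powerset, if S ⊆ S' then (-1:ℝ)^(S'.card - S.card) * Y S' else 0 := by
  rw [← sum_filter]
  refine sum_nbij' (fun T => S ∪ T) (fun S' => S' \ S) ?_ ?_ ?_ ?_ ?_
  · intro T hT
    rw [mem_powerset] at hT
    simp only [mem_filter, mem_powerset]
    exact ⟨union_subset hS (hT.trans sdiff_subset), subset_union_left⟩
  · intro S' hS'
    simp only [mem_filter, mem_powerset] at hS'
    exact mem_powerset.2 (sdiff_subset_sdiff hS'.1 Subset.rfl)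
  · intro T hT
    rw [mem_powerset] at hT
    exact union_sdiff_cancel_left (disjoint_sdiff.mono_right hT)
  · intro S' hS'
    simp only [mem_filter, mem_powerset] at hS'
    exact union_sdiff_of_subset hS'.2
  · intro T hT
    rw [mem_powerset] at hT
    have hd : Disjoint S T := disjoint_sdiff.mono_right hT
    rw [card_union_of_disjoint hd, Nat.add_sub_cancel_left]

theorem inclusion_exclusion_regroup {α : Type*} [DecidableEq α]
    (r : ℕ) (hr : 2 ≤ r) (g : Finset α) (hg : g.card = r) (Y : Finset α → ℝ) :
    ∑ s ∈ Finset.Icc 2 r, ∑ S ∈ Finset.powersetCard s g, ∑ j ∈ Finset.range (r - s + 1),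
        ∑ T ∈ Finset.powersetCard j (g \ S), (-1 : ℝ) ^ j * Y (S ∪ T)
      = ∑ s ∈ Finset.Icc 2 r, ∑ S ∈ Finset.powersetCard s g,
          (-1 : ℝ) ^ s * ((s : ℝ) - 1) * Y S := by
  classical
  -- Step 1: collapse the (j, T) double sum to a powerset sum over T
  have step1 : ∀ s ∈ Icc 2 r, ∀ S ∈ powersetCard s g,
      ∑ j ∈ range (r - s + 1), ∑ T ∈ powersetCard j (g \ S), (-1 : ℝ) ^ j * Y (S ∪ T)
        = ∑ T ∈ (g \ S).powerset, (-1:ℝ)^T.card * Y (S ∪ T) := by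
    intro s hs S hS
    obtain ⟨hSg, hScard⟩ := mem_powersetCard.1 hS
    have hcard : (g \ S).card = r - s := by
      rw [card_sdiff_of_subset hSg, hg, hScard]
    rw [powerset_card_disjiUnion, sum_disjiUnion (h := ((g \ S).pairwise_disjoint_powersetCard.set_pairwise _)), hcard]
    refine sum_congr rfl fun j _ => sum_congr rfl fun T hT => ?_
    rw [(mem_powersetCard.1 hT).2]
  rw [sum_congr rfl fun s hs => sum_congr rfl (step1 s hs)]
  -- Step 2 : reindex T ↦ S ∪ T
  have step2 : ∀ s ∈ Icc 2 r, ∀ S ∈ powersetCard s g,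
      ∑ T ∈ (g \ S).powerset, (-1:ℝ)^T.card * Y (S ∪ T)
        = ∑ S' ∈ g.powerset, if S ⊆ S' then (-1:ℝ)^(S'.card - S.card) * Y S' else 0 :=
    fun s hs S hS => reindex g S (mem_powersetCard.1 hS).1 Y
  rw [sum_congr rfl fun s hs => sum_congr rfl (step2 s hs)]
  -- Step 3 : regroup outer double sum as a powerset sum, both sides
  have rhs_card : ∀ s ∈ Icc 2 r, ∀ S ∈ powersetCard s g,
      (-1:ℝ) ^ s * ((s:ℝ) - 1) * Y S = (-1:ℝ) ^ S.card * ((S.card:ℝ) - 1) * Y S := by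
    intro s _ S hS
    rw [(mem_powersetCard.1 hS).2]
  rw [show (∑ s ∈ Icc 2 r, ∑ S ∈ powersetCard s g, (-1:ℝ) ^ s * ((s:ℝ) - 1) * Y S)
      = ∑ s ∈ Icc 2 r, ∑ S ∈ powersetCard s g, (-1:ℝ) ^ S.card * ((S.card:ℝ) - 1) * Y S
    from sum_congr rfl fun s hs => sum_congr rfl (rhs_card s hs)]
  rw [group_by_card r g hg, group_by_card r g hg]
  -- Step 4 : swap the two powerset sums
  have step4 : ∑ S ∈ g.powerset, (if 2 ≤ S.card then
        ∑ S' ∈ g.powerset, (if S ⊆ S' then (-1:ℝ)^(S'.card - S.card) * Y S' else 0) else 0)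
      = ∑ S' ∈ g.powerset, ∑ S ∈ g.powerset,
        (if 2 ≤ S.card ∧ S ⊆ S' then (-1:ℝ)^(S'.card - S.card) * Y S' else 0) := by
    rw [Finset.sum_comm]
    refine sum_congr rfl fun S _ => ?_
    split_ifs with h
    · refine sum_congr rfl fun S' _ => ?_
      by_cases h2 : S ⊆ S' <;> simp [h, h2]
    · exact (sum_eq_zero fun S' _ => by simp [h]).symm
  rw [step4]
  -- Step 5 : evaluate the inner sum for each S'
  refine sum_congr rfl fun S' hS' => ?_
  rw [mem_powerset] at hS'
  set m := S'.card with hm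
  -- restrict the inner sum to S'.powerset
  have step5 : ∑ S ∈ g.powerset, (if 2 ≤ S.card ∧ S ⊆ S' then (-1:ℝ)^(m - S.card) * Y S' else 0)
      = ∑ S ∈ S'.powerset, (if 2 ≤ S.card then (-1:ℝ)^(m - S.card) * Y S' else 0) := by
    rw [← sum_subset (powerset_mono.2 hS')]
    · refine sum_congr rfl fun S hS => ?_
      rw [mem_powerset] at hS
      simp [hS]
    · intro S _ hS
      rw [mem_powerset] at hS
      simp [hS]
  rw [step5, ← group_by_card S'.card S' rfl]
  have step6 : ∀ s ∈ Icc 2 m, ∑ S ∈ powersetCard s S', (-1:ℝ)^(m - S.card) * Y S'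
      = (m.choose s : ℝ) * (-1:ℝ)^(m - s) * Y S' := by
    intro s _
    rw [sum_congr rfl fun S hS => by rw [(mem_powersetCard.1 hS).2], sum_const,
      card_powersetCard, nsmul_eq_mul]
    ring
  rw [sum_congr rfl step6]
  by_cases h2 : 2 ≤ m
  · rw [if_pos h2, ← sum_mul]
    have := binom_alt m h2
    rw [this]
  · rw [if_neg h2]
    rw [Icc_eq_empty (by omega), sum_empty]
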